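/- Correctness of the reduction used to prove NP-hardness of social model existence: for COLP programs P_1,...,P_n (n ≥ 1), JFP(P_1,...,P_n) ≠ ∅ if and only if SOS(σ^n(P_1),...,σ^n(P_n)) ≠ ∅. -/

import Mathlib

namespace SOLP

/-- Literals: an atom or its negation-as-failure (NAF). -/
inductive Lit (α : Type) where
  | pos (a : α)
  | neg (a : α)

/-- The atom of a literal. -/
def Lit.atom {α : Type} : Lit α → α
  | .pos a => a
  | .neg a => a

/-- Classical truth of a literal w.r.t. an interpretation. -/
def Lit.holds {α : Type} (I : Set α) : Lit α → Prop
  | .pos a => a ∈ I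
  | .neg a => a ∉ I

/-- Renaming of literals. -/
def Lit.map {α β : Type} (f : α → β) : Lit α → Lit β
  | .pos a => .pos (f a)
  | .neg a => .neg (f a)

/-- Selection condition of a social condition: either a member selection `[P_k]`
naming one program, or a cardinal selection `[l,h]`. -/
inductive Cond (n : ℕ) where
  | member (k : Fin n)
  | card (l h : ℕ)

/-- Social conditions (SCs): a selection condition, a content (set of literals)
and a skeleton (set of nested SCs). -/
inductive SC (α : Type) (n : ℕ) where
  | mk (cond : Cond n) (content : List (Lit α)) (skel : List (SC α n))

/-- Occurrence of an atom in a social condition. -/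
inductive SC.HasAtom {α : Type} {n : ℕ} (a : α) : SC α n → Prop where
  | content {c : Cond n} {cont : List (Lit α)} {skel : List (SC α n)} {b : Lit α}
      (hb : b ∈ cont) (h : b.atom = a) : SC.HasAtom a (.mk c cont skel)
  | skel {c : Cond n} {cont : List (Lit α)} {skel : List (SC α n)} {s' : SC α n}
      (hs : s' ∈ skel) (h : SC.HasAtom a s') : SC.HasAtom a (.mk c cont skel)

/-- Well-formed social conditions: either simple (empty skeleton), or a cardinal
SC all of whose nested SCs are either well-formed cardinal SCs with `h' ≤ h`, or
simple member SCs. -/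
inductive SC.WF {α : Type} {n : ℕ} : SC α n → Prop where
  | simple (c : Cond n) (content : List (Lit α)) : SC.WF (.mk c content [])
  | card (l h : ℕ) (content : List (Lit α)) (skel : List (SC α n))
      (hshape : ∀ s' ∈ skel,
        (∃ (l' h' : ℕ) (c' : List (Lit α)) (sk' : List (SC α n)),
            s' = SC.mk (.card l' h') c' sk' ∧ h' ≤ h) ∨
        (∃ (k : Fin n) (c' : List (Lit α)), s' = SC.mk (.member k) c' []))
      (hwf : ∀ s' ∈ skel, ∀ (l' h' : ℕ) (c' : List (Lit α)) (sk' : List (SC α n)),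
          s' = SC.mk (.card l' h') c' sk' → SC.WF s') :
      SC.WF (.mk (.card l h) content skel)

/-- A social rule: head atom (marked as a tolerance rule if the real head is
`okay(head)`), a body of literals, and a list of SCs, each marked positive
(`true`) or NAF (`false`). -/
structure SRule (α : Type) (n : ℕ) where
  head : α
  isOkay : Bool
  lits : List (Lit α)
  scs : List (SC α n × Bool)

/-- A SOLP program. -/
abbrev SProgram (α : Type) (n : ℕ) := Set (SRule α n)

/-- `okay(p) ← body` becomes `p ← p, body`; other rules are unchanged. -/
def hatP {α : Type} {n : ℕ} (P : SProgram α n) : SProgram α n :=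
  {r ∈ P | r.isOkay = false} ∪
    (fun r : SRule α n => ⟨r.head, false, .pos r.head :: r.lits, r.scs⟩) ''
      {r ∈ P | r.isOkay = true}

/-- The autonomous reduction: remove all social conditions. -/
def AP {α : Type} {n : ℕ} (P : SProgram α n) : SProgram α n :=
  (fun r : SRule α n => ⟨r.head, r.isOkay, r.lits, []⟩) '' P

/-- The atoms occurring in a SOLP program. -/
def SVar {α : Type} {n : ℕ} (P : SProgram α n) : Set α :=
  {a | ∃ r ∈ P, r.head = a ∨ (∃ b ∈ r.lits, Lit.atom b = a) ∨
        (∃ p ∈ r.scs, SC.HasAtom a p.1)}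

/-- Truth of a list of literals w.r.t. an interpretation. -/
def litsTrue {α : Type} (I : Set α) (L : List (Lit α)) : Prop := ∀ b ∈ L, b.holds I

/-- The autonomous immediate consequence operator `AT_P`. -/
def ATP {α : Type} {n : ℕ} (P : SProgram α n) (I : Set α) : Set α :=
  {a | ∃ r ∈ AP P, r.isOkay = false ∧ r.head = a ∧ litsTrue I r.lits} ∪
  {a | ∃ r ∈ AP P, r.isOkay = true ∧ r.head = a ∧ a ∈ I ∧ litsTrue I r.lits}

/-- Autonomous fixpoints of a SOLP program. -/
def AFP {α : Type} {n : ℕ} (P : SProgram α n) : Set (Set α) :=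
  {I | I ⊆ SVar (AP P) ∧ ATP P I = I}

/-- Social interpretations: sets of labelled atoms `a_{P_i}`. -/
abbrev SInterp (α : Type) (n : ℕ) := Set (Fin n × α)

/-- Truth of a literal for program `p` w.r.t. a social interpretation. -/
def Lit.trueFor {α : Type} {n : ℕ} (I : SInterp α n) (p : Fin n) : Lit α → Prop
  | .pos a => (p, a) ∈ I
  | .neg a => (p, a) ∉ I

/-- Truth of an SC of `P_j` in a sub-collection `C'` w.r.t. a social interpretation. -/
inductive SC.TrueIn {α : Type} {n : ℕ} (I : SInterp α n) (j : Fin n) :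
    Set (Fin n) → SC α n → Prop where
  | member {C' : Set (Fin n)} {k : Fin n} {content : List (Lit α)} {skel : List (SC α n)}
      (hk : k ∈ C') (hc : ∀ b ∈ content, Lit.trueFor I k b) :
      SC.TrueIn I j C' (.mk (.member k) content skel)
  | card {C' : Set (Fin n)} {l h : ℕ} {content : List (Lit α)} {skel : List (SC α n)}
      (D : Finset (Fin n)) (hD : ∀ p ∈ D, p ∈ C' ∧ p ≠ j)
      (hl : l ≤ D.card) (hh : D.card ≤ h)
      (hc : ∀ b ∈ content, ∀ p ∈ D, Lit.trueFor I p b)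
      (D' : ∀ s' ∈ skel, Finset (Fin n))
      (hsub : ∀ (s' : SC α n) (hs' : s' ∈ skel), D' s' hs' ⊆ D)
      (hs : ∀ (s' : SC α n) (hs' : s' ∈ skel), SC.TrueIn I j ↑(D' s' hs') s') :
      SC.TrueIn I j C' (.mk (.card l h) content skel)

/-- `s` is true for `P_j` w.r.t. `Ī` (in the whole collection). -/
def SC.TrueFor {α : Type} {n : ℕ} (I : SInterp α n) (j : Fin n) (s : SC α n) : Prop :=
  SC.TrueIn I j Set.univ s

/-- Truth of the body of a social rule of `P_j` w.r.t. a social interpretation. -/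
def SRule.bodyTrue {α : Type} {n : ℕ} (I : SInterp α n) (j : Fin n) (r : SRule α n) : Prop :=
  (∀ b ∈ r.lits, Lit.trueFor I j b) ∧
  (∀ p ∈ r.scs, (p.2 = true → SC.TrueFor I j p.1) ∧ (p.2 = false → ¬ SC.TrueFor I j p.1))

/-- The social immediate consequence operator `ST_C`. -/
def STC {α : Type} {n : ℕ} (C : Fin n → SProgram α n) (I : SInterp α n) : SInterp α n :=
  {x | ∃ r ∈ C x.1, r.isOkay = false ∧ r.head = x.2 ∧ SRule.bodyTrue I x.1 r} ∪
  {x | ∃ r ∈ C x.1, r.isOkay = true ∧ r.head = x.2 ∧ x ∈ I ∧ SRule.bodyTrue I x.1 r}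

/-- The labelled version `(L)_{P_i}` of a set of atoms. -/
def labelled {α : Type} {n : ℕ} (i : Fin n) (L : Set α) : SInterp α n :=
  {x | x.1 = i ∧ x.2 ∈ L}

/-- Candidate social interpretations: combinations of autonomous fixpoints. -/
def Candidate {α : Type} {n : ℕ} (C : Fin n → SProgram α n) (I : SInterp α n) : Prop :=
  ∃ F : Fin n → Set α, (∀ i, F i ∈ AFP (C i)) ∧ I = ⋃ i, labelled i (F i)

/-- The Social Semantics: the set of social models. -/
def SOS {α : Type} {n : ℕ} (C : Fin n → SProgram α n) : Set (SInterp α n) :=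
  {I | Candidate C I ∧ STC C I = I}

/-! ### Traditional (normal) logic programs -/

/-- A normal logic-program rule. -/
structure NRule (γ : Type) where
  head : γ
  body : List (Lit γ)

abbrev NProgram (γ : Type) := Set (NRule γ)

/-- The atoms occurring in a normal program. -/
def NVar {γ : Type} (P : NProgram γ) : Set γ :=
  {a | ∃ r ∈ P, r.head = a ∨ ∃ b ∈ r.body, Lit.atom b = a}

/-- The immediate consequence operator `T_P`. -/
def TN {γ : Type} (P : NProgram γ) (I : Set γ) : Set γ :=
  {a | ∃ r ∈ P, r.head = a ∧ ∀ b ∈ r.body, b.holds I}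

/-- Fixpoints of a traditional program. -/
def NFP {γ : Type} (P : NProgram γ) : Set (Set γ) :=
  {I | I ⊆ NVar P ∧ TN P I = I}

/-- Keep a positive literal, drop a negative one. -/
def Lit.posOnly {γ : Type} : Lit γ → Option (Lit γ)
  | .pos a => some (.pos a)
  | .neg _ => none

/-- The Gelfond–Lifschitz reduct `P^M`. -/
def GLReduct {γ : Type} (P : NProgram γ) (M : Set γ) : NProgram γ :=
  {r | ∃ r' ∈ P, (∀ c : γ, Lit.neg c ∈ r'.body → c ∉ M) ∧
        r = ⟨r'.head, r'.body.filterMap Lit.posOnly⟩}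

/-- The least model of a (positive) program, as the intersection of all sets
closed under its rules. -/
def LeastModel {γ : Type} (P : NProgram γ) : Set γ :=
  ⋂₀ {I | ∀ r ∈ P, (∀ a : γ, Lit.pos a ∈ r.body → a ∈ I) → r.head ∈ I}

/-- Stable models (Gelfond–Lifschitz) of a normal program. -/
def SMN {γ : Type} (P : NProgram γ) : Set (Set γ) :=
  {M | M = LeastModel (GLReduct P M)}

/-! ### The translation vocabulary -/

/-- Atoms of the translated programs: `a_P`, `a'_P`, `sa_P`, `fail_P`, `ρ(s)_P`
and the `g(s)(k)_P` predicates. -/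
inductive GAtom (α : Type) (n : ℕ) where
  | atm (a : α)
  | prim (a : α)
  | sup (a : α)
  | fail
  | rho (s : SC α n)
  | g (s : SC α n) (k : Fin n)

/-- The guessing rules `S_1` over a vocabulary `V`. -/
def GammaS1 {α : Type} {n : ℕ} (V : Set α) : NProgram (GAtom α n) :=
  {r | ∃ a ∈ V, r = ⟨GAtom.atm a, [Lit.neg (GAtom.prim a)]⟩ ∨
                r = ⟨GAtom.prim a, [Lit.neg (GAtom.atm a)]⟩}

/-- The checking rules `S_3` over a vocabulary `V`. -/
def GammaS3 {α : Type} {n : ℕ} (V : Set α) : NProgram (GAtom α n) :=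
  {r | ∃ a ∈ V,
      r = ⟨GAtom.fail, [Lit.neg GAtom.fail, Lit.pos (GAtom.sup a), Lit.neg (GAtom.atm a)]⟩ ∨
      r = ⟨GAtom.fail, [Lit.neg GAtom.fail, Lit.pos (GAtom.atm a), Lit.neg (GAtom.sup a)]⟩}

/-- The transformation `Γ` of Buccafurri–Gottlob, for traditional programs. -/
def Gamma {α : Type} {n : ℕ} (P : NProgram α) : NProgram (GAtom α n) :=
  GammaS1 (NVar P) ∪
  {r | ∃ r' ∈ P, r = ⟨GAtom.sup r'.head, r'.body.map (Lit.map GAtom.atm)⟩} ∪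
  GammaS3 (NVar P)

/-- The translated body of a social rule: labelled literals followed by the
`ρ`-literals corresponding to its (possibly NAF'd) SCs. -/
def SRule.transBody {α : Type} {n : ℕ} (r : SRule α n) : List (Lit (GAtom α n)) :=
  r.lits.map (Lit.map GAtom.atm) ++
    r.scs.map (fun p => if p.2 then Lit.pos (GAtom.rho p.1) else Lit.neg (GAtom.rho p.1))

/-- The extended transformation `Γ'` for SOLP programs. -/
def Gamma' {α : Type} {n : ℕ} (Q : SProgram α n) : NProgram (GAtom α n) :=
  GammaS1 (SVar (AP (hatP Q))) ∪
  {r | ∃ r' ∈ Q, r = ⟨GAtom.sup r'.head, SRule.transBody r'⟩} ∪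
  GammaS3 (SVar (AP (hatP Q)))

/-- Forget the SCs (and okay-marking) of a social rule, yielding a traditional rule. -/
def SRule.toN {α : Type} {n : ℕ} (r : SRule α n) : NRule α := ⟨r.head, r.lits⟩

/-- View an SC-free SOLP program as a traditional program. -/
def toTrad {α : Type} {n : ℕ} (P : SProgram α n) : NProgram α := SRule.toN '' P

/-- The encoding `[M]_P` of an interpretation of a SOLP program `P`. -/
def encode {α : Type} {n : ℕ} (P : SProgram α n) (M : Set α) : Set (GAtom α n) :=
  (GAtom.atm '' M) ∪ (GAtom.prim '' (SVar (AP (hatP P)) \ M)) ∪ (GAtom.sup '' M)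

/-- The encoding `[M]_P` of an interpretation of a traditional program `P`. -/
def encodeN {α : Type} (n : ℕ) (P : NProgram α) (M : Set α) : Set (GAtom α n) :=
  (GAtom.atm '' M) ∪ (GAtom.prim '' (NVar P \ M)) ∪ (GAtom.sup '' M)

/-- Renaming of rules. -/
def NRule.map {γ δ : Type} (f : γ → δ) (r : NRule γ) : NRule δ :=
  ⟨f r.head, r.body.map (Lit.map f)⟩

/-- Labelling of a whole program w.r.t. `P_i`. -/
def labProg {γ : Type} {n : ℕ} (i : Fin n) (P : NProgram γ) : NProgram (Fin n × γ) :=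
  (NRule.map (fun a => (i, a))) '' P

/-! ### Aggregate programs -/

/-- A `#count` aggregate `l ≤ #count{K : atomOf K, cond K} ≤ h`. -/
structure CountAgg (γ : Type) (κ : Type) where
  l : ℕ
  h : ℕ
  atomOf : κ → γ
  cond : κ → Prop

/-- Truth of a count aggregate w.r.t. an interpretation. -/
def CountAgg.holds {γ κ : Type} (M : Set γ) (c : CountAgg γ κ) : Prop :=
  c.l ≤ Set.ncard {K | c.cond K ∧ c.atomOf K ∈ M} ∧
  Set.ncard {K | c.cond K ∧ c.atomOf K ∈ M} ≤ c.h

/-- A rule of a logic program with count aggregates. -/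
structure ARule (γ : Type) (κ : Type) where
  head : γ
  body : List (Lit γ)
  aggs : List (CountAgg γ κ)

abbrev AProgram (γ : Type) (κ : Type) := Set (ARule γ κ)

/-- Truth of the body of an aggregate rule. -/
def ARule.bodyHolds {γ κ : Type} (M : Set γ) (r : ARule γ κ) : Prop :=
  (∀ b ∈ r.body, b.holds M) ∧ (∀ c ∈ r.aggs, c.holds M)

/-- `M` is a (classical) model of an aggregate program. -/
def AModel {γ κ : Type} (P : AProgram γ κ) (M : Set γ) : Prop :=
  ∀ r ∈ P, r.bodyHolds M → r.head ∈ M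

/-- Stable (answer-set) semantics for aggregate programs: `M` is a minimal model
of the reduct consisting of the rules whose bodies are true w.r.t. `M`. -/
def AStable {γ κ : Type} (P : AProgram γ κ) (M : Set γ) : Prop :=
  AModel P M ∧
  ∀ N : Set γ, N ⊆ M → (∀ r ∈ P, r.bodyHolds M → r.bodyHolds N → r.head ∈ N) → N = M

/-- An aggregate-free rule, seen as an aggregate rule. -/
def NRule.toA {γ : Type} (κ : Type) (r : NRule γ) : ARule γ κ := ⟨r.head, r.body, []⟩

def toAProg {γ : Type} (κ : Type) (P : NProgram γ) : AProgram γ κ := NRule.toA κ '' P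

/-! ### The translation `Ψ` of social conditions -/

/-- Membership of a rule in the translation `Ψ^{P_j}(s)` of a social condition. -/
inductive PsiMem {α : Type} {n : ℕ} (j : Fin n) :
    SC α n → ARule (Fin n × GAtom α n) (Fin n) → Prop where
  | memberGuess (k : Fin n) (content : List (Lit α)) (skel : List (SC α n)) :
      PsiMem j (.mk (.member k) content skel)
        ⟨(j, GAtom.g (.mk (.member k) content skel) k),
          content.map (Lit.map fun a => (k, GAtom.atm a)), []⟩
  | memberCheck (k : Fin n) (content : List (Lit α)) (skel : List (SC α n)) :
      PsiMem j (.mk (.member k) content skel)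
        ⟨(j, GAtom.rho (.mk (.member k) content skel)),
          [Lit.pos (j, GAtom.g (.mk (.member k) content skel) k)], []⟩
  | cardGuess (l h : ℕ) (content : List (Lit α)) (skel : List (SC α n))
      (i : Fin n) (hij : i ≠ j) :
      PsiMem j (.mk (.card l h) content skel)
        ⟨(j, GAtom.g (.mk (.card l h) content skel) i),
          content.map (Lit.map fun a => (i, GAtom.atm a)) ++
            skel.map (fun s' => Lit.pos (j, GAtom.rho s')), []⟩
  | cardCheck (l h : ℕ) (content : List (Lit α)) (skel : List (SC α n)) :
      PsiMem j (.mk (.card l h) content skel)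
        ⟨(j, GAtom.rho (.mk (.card l h) content skel)), [],
          [⟨l, h, fun K => (j, GAtom.g (.mk (.card l h) content skel) K),
            fun K => K ≠ j⟩]⟩
  | nested (l h : ℕ) (content : List (Lit α)) (skel : List (SC α n))
      (s' : SC α n) (hs : s' ∈ skel) (r : ARule (Fin n × GAtom α n) (Fin n))
      (hr : PsiMem j s' r) :
      PsiMem j (.mk (.card l h) content skel) r

/-- The translation `Ψ^{P_j}(s)` of a single social condition. -/
def Psi {α : Type} {n : ℕ} (j : Fin n) (s : SC α n) :
    AProgram (Fin n × GAtom α n) (Fin n) :=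
  {r | PsiMem j s r}

/-- The depth-0 social conditions of a SOLP program. -/
def MSC {α : Type} {n : ℕ} (P : SProgram α n) : Set (SC α n) :=
  {s | ∃ r ∈ P, ∃ b : Bool, (s, b) ∈ r.scs}

/-- The SC translation `C(P_1, ..., P_n)` of a whole SOLP collection. -/
def CTrans {α : Type} {n : ℕ} (C : Fin n → SProgram α n) :
    AProgram (Fin n × GAtom α n) (Fin n) :=
  ⋃ j, ⋃ s ∈ MSC (C j), Psi j s

/-- The program of facts `{a ← : a ∈ Ī}` corresponding to a social interpretation. -/
def factProg {α : Type} {n : ℕ} (I : SInterp α n) :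
    AProgram (Fin n × GAtom α n) (Fin n) :=
  {r | ∃ x ∈ I, r = ⟨(x.1, GAtom.atm x.2), [], []⟩}

/-- The set `SAT^{P_j}_{Ī}(s)` of heads of rules of `Ψ^{P_j}(s)` belonging to
some stable model of `C(P_1,...,P_n) ∪ Q`. -/
def SAT {α : Type} {n : ℕ} (C : Fin n → SProgram α n) (I : SInterp α n)
    (j : Fin n) (s : SC α n) : Set (Fin n × GAtom α n) :=
  {x | (∃ r, PsiMem j s r ∧ r.head = x) ∧
       ∃ M, AStable (CTrans C ∪ factProg I) M ∧ x ∈ M}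

/-! ### COLP programs -/

/-- A COLP rule: a classical rule or an okay-rule, with a body of literals. -/
structure CRule (α : Type) where
  head : α
  isOkay : Bool
  lits : List (Lit α)

abbrev CProgram (α : Type) := Set (CRule α)

/-- The hat operator on COLP programs: `okay(p) ← body` becomes `p ← p, body`. -/
def CRule.hatN {α : Type} (r : CRule α) : NRule α :=
  if r.isOkay then ⟨r.head, .pos r.head :: r.lits⟩ else ⟨r.head, r.lits⟩

def hatC {α : Type} (P : CProgram α) : NProgram α := CRule.hatN '' P

/-- The SOLP translation `σ^n` of a COLP rule. -/
def sigmaRule {α : Type} (n : ℕ) (r : CRule α) : SRule α n :=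
  ⟨r.head, r.isOkay, r.lits, [(SC.mk (.card (n - 1) (n - 1)) [Lit.pos r.head] [], true)]⟩

/-- The SOLP translation `σ^n` of a COLP program. -/
def sigmaP {α : Type} (n : ℕ) (P : CProgram α) : SProgram α n := sigmaRule n '' P

/-- The joint fixpoints `JFP(P_1,...,P_n)` of a collection of COLP programs. -/
def JFP {α : Type} {n : ℕ} (P : Fin n → CProgram α) : Set (Set α) :=
  ⋂ i, NFP (hatC (P i))

end SOLP

namespace SOLP

section Aux

variable {α : Type} {n : ℕ}

lemma hatN_head {α : Type} (r : CRule α) : (CRule.hatN r).head = r.head := by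
  unfold CRule.hatN; split <;> rfl

lemma hatN_body_false {α : Type} (r : CRule α) (h : r.isOkay = false) :
    (CRule.hatN r).body = r.lits := by
  unfold CRule.hatN; rw [h]; rfl

lemma hatN_body_true {α : Type} (r : CRule α) (h : r.isOkay = true) :
    (CRule.hatN r).body = Lit.pos r.head :: r.lits := by
  unfold CRule.hatN; rw [h]; rfl

lemma sigmaRule_head {α : Type} (r : CRule α) : (sigmaRule n r).head = r.head := rfl
lemma sigmaRule_isOkay {α : Type} (r : CRule α) :
    (sigmaRule n r).isOkay = r.isOkay := rfl
lemma sigmaRule_lits {α : Type} (r : CRule α) : (sigmaRule n r).lits = r.lits := rfl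

/-- Characterization of the variables of the autonomized hat of σⁿ(Q). -/
lemma svar_eq (Q : CProgram α) :
    SVar (AP (hatP (sigmaP n Q))) = NVar (hatC Q) := by
  have key : ∀ a, a ∈ NVar (hatC Q) ↔
      ∃ r0 ∈ Q, r0.head = a ∨ ∃ b ∈ r0.lits, Lit.atom b = a := by
    intro a
    constructor
    · rintro ⟨r, ⟨r0, hr0, rfl⟩, hcond⟩
      refine ⟨r0, hr0, ?_⟩
      rw [hatN_head] at hcond
      rcases hcond with h | ⟨b, hb, hba⟩
      · exact Or.inl h
      · cases hok : r0.isOkay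
        · rw [hatN_body_false r0 hok] at hb
          exact Or.inr ⟨b, hb, hba⟩
        · rw [hatN_body_true r0 hok] at hb
          rcases List.mem_cons.mp hb with rfl | hb
          · exact Or.inl hba
          · exact Or.inr ⟨b, hb, hba⟩
    · rintro ⟨r0, hr0, hcond⟩
      refine ⟨CRule.hatN r0, ⟨r0, hr0, rfl⟩, ?_⟩
      rw [hatN_head]
      rcases hcond with h | ⟨b, hb, hba⟩
      · exact Or.inl h
      · refine Or.inr ⟨b, ?_, hba⟩
        cases hok : r0.isOkay
        · rw [hatN_body_false r0 hok]; exact hb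
        · rw [hatN_body_true r0 hok]; exact List.mem_cons_of_mem _ hb
  ext a
  rw [key a]
  constructor
  · rintro ⟨r, ⟨r1, hr1, rfl⟩, hcond⟩
    rcases hr1 with ⟨⟨r0, hr0, rfl⟩, hok⟩ | ⟨r2, ⟨⟨r0, hr0, rfl⟩, hok⟩, rfl⟩
    · refine ⟨r0, hr0, ?_⟩
      rcases hcond with h | ⟨b, hb, hba⟩ | ⟨p, hp, _⟩
      · exact Or.inl h
      · exact Or.inr ⟨b, hb, hba⟩
      · exact absurd hp List.not_mem_nil
    · refine ⟨r0, hr0, ?_⟩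
      rcases hcond with h | ⟨b, hb, hba⟩ | ⟨p, hp, _⟩
      · exact Or.inl h
      · rcases List.mem_cons.mp hb with rfl | hb
        · exact Or.inl hba
        · exact Or.inr ⟨b, hb, hba⟩
      · exact absurd hp List.not_mem_nil
  · rintro ⟨r0, hr0, hcond⟩
    cases hok : r0.isOkay
    · refine ⟨⟨r0.head, false, r0.lits, []⟩,
        ⟨sigmaRule n r0, Or.inl ⟨⟨r0, hr0, rfl⟩, by rw [sigmaRule_isOkay, hok]⟩, by
          simp [sigmaRule, hok]⟩, ?_⟩
      rcases hcond with h | ⟨b, hb, hba⟩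
      · exact Or.inl h
      · exact Or.inr (Or.inl ⟨b, hb, hba⟩)
    · refine ⟨⟨r0.head, false, Lit.pos r0.head :: r0.lits, []⟩,
        ⟨⟨r0.head, false, Lit.pos (sigmaRule n r0).head :: (sigmaRule n r0).lits,
            (sigmaRule n r0).scs⟩,
          Or.inr ⟨sigmaRule n r0, ⟨⟨r0, hr0, rfl⟩, by rw [sigmaRule_isOkay, hok]⟩, rfl⟩,
          by simp [sigmaRule]⟩, ?_⟩
      rcases hcond with h | ⟨b, hb, hba⟩
      · exact Or.inl h
      · exact Or.inr (Or.inl ⟨b, List.mem_cons_of_mem _ hb, hba⟩)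

/-- The autonomous operator of σⁿ(Q) coincides with T of the hat program. -/
lemma atp_eq (Q : CProgram α) (M : Set α) :
    ATP (sigmaP n Q) M = TN (hatC Q) M := by
  ext a
  constructor
  · rintro (⟨r, ⟨r1, ⟨r0, hr0, rfl⟩, rfl⟩, hok, rfl, hlits⟩ |
            ⟨r, ⟨r1, ⟨r0, hr0, rfl⟩, rfl⟩, hok, rfl, haM, hlits⟩)
    · refine ⟨CRule.hatN r0, ⟨r0, hr0, rfl⟩, hatN_head r0, ?_⟩
      rw [hatN_body_false r0 hok]
      exact hlits
    · refine ⟨CRule.hatN r0, ⟨r0, hr0, rfl⟩, hatN_head r0, ?_⟩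
      rw [hatN_body_true r0 hok]
      intro b hb
      rcases List.mem_cons.mp hb with rfl | hb
      · exact haM
      · exact hlits b hb
  · rintro ⟨r, ⟨r0, hr0, rfl⟩, rfl, hbody⟩
    cases hok : r0.isOkay
    · left
      refine ⟨⟨r0.head, r0.isOkay, r0.lits, []⟩,
        ⟨sigmaRule n r0, ⟨r0, hr0, rfl⟩, by simp [sigmaRule]⟩, hok,
        (hatN_head r0).symm, ?_⟩
      intro b hb
      exact hbody b (by rw [hatN_body_false r0 hok]; exact hb)
    · right
      refine ⟨⟨r0.head, r0.isOkay, r0.lits, []⟩,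
        ⟨sigmaRule n r0, ⟨r0, hr0, rfl⟩, by simp [sigmaRule]⟩, hok,
        (hatN_head r0).symm, ?_, ?_⟩
      · have := hbody (Lit.pos r0.head)
          (by rw [hatN_body_true r0 hok]; exact List.mem_cons_self)
        rw [hatN_head]
        exact this
      · intro b hb
        exact hbody b (by rw [hatN_body_true r0 hok]; exact List.mem_cons_of_mem _ hb)

lemma svar_sigma (Q : CProgram α) :
    SVar (AP (sigmaP n Q)) = NVar (hatC Q) := by
  ext a
  constructor
  · rintro ⟨r, ⟨r1, ⟨r0, hr0, rfl⟩, rfl⟩, hcond⟩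
    refine ⟨CRule.hatN r0, ⟨r0, hr0, rfl⟩, ?_⟩
    rw [hatN_head]
    rcases hcond with h | ⟨b, hb, hba⟩ | ⟨p, hp, _⟩
    · exact Or.inl h
    · refine Or.inr ⟨b, ?_, hba⟩
      cases hok : r0.isOkay
      · rw [hatN_body_false r0 hok]; exact hb
      · rw [hatN_body_true r0 hok]; exact List.mem_cons_of_mem _ hb
    · exact absurd hp List.not_mem_nil
  · rintro ⟨r, ⟨r0, hr0, rfl⟩, hcond⟩
    refine ⟨⟨r0.head, r0.isOkay, r0.lits, []⟩,
      ⟨sigmaRule n r0, ⟨r0, hr0, rfl⟩, by simp [sigmaRule]⟩, ?_⟩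
    rw [hatN_head] at hcond
    rcases hcond with h | ⟨b, hb, hba⟩
    · exact Or.inl h
    · cases hok : r0.isOkay
      · rw [hatN_body_false r0 hok] at hb
        exact Or.inr (Or.inl ⟨b, hb, hba⟩)
      · rw [hatN_body_true r0 hok] at hb
        rcases List.mem_cons.mp hb with rfl | hb
        · exact Or.inl hba
        · exact Or.inr (Or.inl ⟨b, hb, hba⟩)

/-- The σ-social condition is true for `j` iff the atom holds for every other program. -/
lemma sc_char (I : SInterp α n) (j : Fin n) (a : α) :
    SC.TrueFor I j (SC.mk (.card (n - 1) (n - 1)) [Lit.pos a] []) ↔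
      ∀ p : Fin n, p ≠ j → (p, a) ∈ I := by
  have hcard : (Finset.univ.erase j).card = n - 1 := by
    simp [Finset.card_erase_of_mem, Finset.card_univ]
  constructor
  · intro h
    cases h with
    | card D hD hl hh hc D' hsub hs =>
      have hDsub : D ⊆ Finset.univ.erase j := by
        intro p hp
        exact Finset.mem_erase.mpr ⟨(hD p hp).2, Finset.mem_univ p⟩
      have hDeq : D = Finset.univ.erase j :=
        Finset.eq_of_subset_of_card_le hDsub (by omega)
      intro p hp
      have hpD : p ∈ D := hDeq ▸ Finset.mem_erase.mpr ⟨hp, Finset.mem_univ p⟩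
      exact hc (Lit.pos a) (List.mem_singleton.mpr rfl) p hpD
  · intro h
    refine SC.TrueIn.card (Finset.univ.erase j) ?_ (le_of_eq hcard.symm)
      (le_of_eq hcard) ?_ (fun s' hs' => ∅) ?_ ?_
    · intro p hp
      exact ⟨trivial, (Finset.mem_erase.mp hp).1⟩
    · intro b hb p hp
      rcases List.mem_singleton.mp hb with rfl
      exact h p (Finset.mem_erase.mp hp).1
    · intro s' hs'; exact absurd hs' List.not_mem_nil
    · intro s' hs'; exact absurd hs' List.not_mem_nil

lemma trueFor_iff (I : SInterp α n) (j : Fin n) (M : Set α)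
    (hI : ∀ a, (j, a) ∈ I ↔ a ∈ M) (b : Lit α) :
    Lit.trueFor I j b ↔ b.holds M := by
  cases b <;> simp [Lit.trueFor, Lit.holds, hI]

end Aux

end SOLP

open SOLP in
/-- `JFP(P_1,...,P_n) ≠ ∅` iff `SOS(σ^n(P_1),...,σ^n(P_n)) ≠ ∅`. -/
theorem jfp_nonempty_iff_sos_nonempty {α : Type} (n : ℕ) (hn : 1 ≤ n)
    (P : Fin n → CProgram α) :
    (JFP P).Nonempty ↔ (SOS (fun i => sigmaP n (P i))).Nonempty := by
  constructor
  · rintro ⟨M, hM⟩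
    simp only [JFP, Set.mem_iInter, NFP, Set.mem_setOf_eq] at hM
    set I : SInterp α n := ⋃ i, labelled i M with hIdef
    have memI : ∀ (j : Fin n) (a : α), (j, a) ∈ I ↔ a ∈ M := by
      intro j a
      constructor
      · intro h
        rcases Set.mem_iUnion.mp h with ⟨i, hi⟩
        exact hi.2
      · intro h
        exact Set.mem_iUnion.mpr ⟨j, ⟨rfl, h⟩⟩
    refine ⟨I, ⟨fun _ => M, fun i => ⟨?_, ?_⟩, ?_⟩, ?_⟩
    · rw [svar_sigma]; exact (hM i).1
    · rw [atp_eq]; exact (hM i).2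
    · rfl
    · -- STC fixpoint
      ext ⟨j, a⟩
      constructor
      · intro hmem
        rcases hmem with ⟨r, ⟨r0, hr0, rfl⟩, hok, hhead, hbody⟩ |
                         ⟨r, hr, hok, hhead, hxI, hbody⟩
        · rw [memI, ← (hM j).2]
          refine ⟨CRule.hatN r0, ⟨r0, hr0, rfl⟩, by rw [hatN_head]; exact hhead, ?_⟩
          rw [hatN_body_false r0 hok]
          intro b hb
          exact (trueFor_iff I j M (memI j) b).mp (hbody.1 b hb)
        · exact hxI
      · intro hx
        have haM : a ∈ M := (memI j a).mp hx
        rw [← (hM j).2] at haM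
        rcases haM with ⟨r', ⟨r0, hr0, rfl⟩, hhead, hb⟩
        rw [hatN_head] at hhead
        have haM' : a ∈ M := by
          rw [← (hM j).2]
          exact ⟨CRule.hatN r0, ⟨r0, hr0, rfl⟩, by rw [hatN_head]; exact hhead, hb⟩
        have hsc : SC.TrueFor I j (SC.mk (.card (n - 1) (n - 1)) [Lit.pos r0.head] []) := by
          rw [sc_char]
          intro p _
          rw [memI, hhead]
          exact haM'
        have hscsOK : ∀ p ∈ (sigmaRule n r0).scs,
            (p.2 = true → SC.TrueFor I j p.1) ∧ (p.2 = false → ¬ SC.TrueFor I j p.1) := by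
          intro p hp
          rcases List.mem_singleton.mp hp with rfl
          exact ⟨fun _ => hsc, fun h => by simp at h⟩
        cases hok : r0.isOkay
        · refine Set.mem_union_left _
            ⟨sigmaRule n r0, ⟨r0, hr0, rfl⟩, hok, hhead, ?_, hscsOK⟩
          intro b hb'
          refine (trueFor_iff I j M (memI j) b).mpr ?_
          exact hb b (by rw [hatN_body_false r0 hok]; exact hb')
        · refine Set.mem_union_right _
            ⟨sigmaRule n r0, ⟨r0, hr0, rfl⟩, hok, hhead, hx, ?_, hscsOK⟩
          intro b hb'
          refine (trueFor_iff I j M (memI j) b).mpr ?_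
          exact hb b (by rw [hatN_body_true r0 hok]; exact List.mem_cons_of_mem _ hb')
  · rintro ⟨I, ⟨F, hF, rfl⟩, hfix⟩
    set I : SInterp α n := ⋃ i, labelled i (F i) with hIdef
    have memI : ∀ (j : Fin n) (a : α), (j, a) ∈ I ↔ a ∈ F j := by
      intro j a
      constructor
      · intro h
        rcases Set.mem_iUnion.mp h with ⟨i, hi⟩
        have h1 : j = i := hi.1
        subst h1
        exact hi.2
      · intro h
        exact Set.mem_iUnion.mpr ⟨j, ⟨rfl, h⟩⟩
    have hall : ∀ (j : Fin n) (a : α), a ∈ F j → ∀ p : Fin n, a ∈ F p := by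
      intro j a haj p
      by_cases hpj : p = j
      · subst hpj; exact haj
      have hxI : (j, a) ∈ I := (memI j a).mpr haj
      rw [← hfix] at hxI
      have key : ∃ r0 ∈ P j, r0.head = a ∧ SRule.bodyTrue I j (sigmaRule n r0) := by
        rcases hxI with ⟨r, ⟨r0, hr0, rfl⟩, _, hhead, hbody⟩ |
                        ⟨r, ⟨r0, hr0, rfl⟩, _, hhead, _, hbody⟩
        · exact ⟨r0, hr0, hhead, hbody⟩
        · exact ⟨r0, hr0, hhead, hbody⟩
      rcases key with ⟨r0, hr0, hhead, hbody⟩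
      have hsc := (hbody.2 (SC.mk (.card (n - 1) (n - 1)) [Lit.pos r0.head] [], true)
        (List.mem_singleton.mpr rfl)).1 rfl
      rw [sc_char] at hsc
      have := hsc p hpj
      rw [memI, hhead] at this
      exact this
    set M : Set α := F ⟨0, hn⟩ with hMdef
    have hFeq : ∀ i, F i = M := by
      intro i
      ext a
      exact ⟨fun h => hall i a h _, fun h => hall _ a h i⟩
    refine ⟨M, Set.mem_iInter.mpr fun i => ?_⟩
    have hFi := hF i
    rw [hFeq i] at hFi
    rcases hFi with ⟨hsub, hfp⟩
    rw [svar_sigma] at hsub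
    rw [atp_eq] at hfp
    exact ⟨hsub, hfp⟩
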